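/- Comparison principle for the DPP: if u and ū are bounded Borel functions on Ω_ε that both satisfy the DPP at every point of Ω, and ū ≥ u on Γ_ε, then ū ≥ u on all of Ω_ε. -/

import Mathlib

open MeasureTheory Metric Set

lemma aux_infDist_frontier_le {E : Type*} [NormedAddCommGroup E] [NormedSpace ℝ E]
    {Ω : Set E} (hΩ : IsOpen Ω) {x z : E} (hx : x ∈ Ω) (hz : z ∉ Ω) :
    Metric.infDist z (frontier Ω) ≤ dist z x := by
  obtain ⟨y, hyseg, hyf⟩ : ∃ y ∈ segment ℝ x z, y ∈ frontier Ω := by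
    by_contra hcon
    push_neg at hcon
    have hpc : IsPreconnected (segment ℝ x z) := (convex_segment x z).isPreconnected
    have h1 : segment ℝ x z ⊆ Ω ∪ (closure Ω)ᶜ := by
      intro s hs
      by_cases hsc : s ∈ closure Ω
      · left
        have := hcon s hs
        rw [frontier, hΩ.interior_eq] at this
        by_contra hsΩ
        exact this ⟨hsc, hsΩ⟩
      · exact Or.inr hsc
    have h2 := hpc Ω (closure Ω)ᶜ hΩ isClosed_closure.isOpen_compl h1
      ⟨x, left_mem_segment ℝ x z, hx⟩
      ⟨z, right_mem_segment ℝ x z, fun hzc => by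
        have := hcon z (right_mem_segment ℝ x z)
        rw [frontier, hΩ.interior_eq] at this
        exact this ⟨hzc, hz⟩⟩
    obtain ⟨w, _, hw1, hw2⟩ := h2
    exact hw2 (subset_closure hw1)
  have hdy : dist y z ≤ dist x z := by
    have : y ∈ Metric.closedBall z (dist x z) :=
      (convex_closedBall z (dist x z)).segment_subset
        (by simp [Metric.mem_closedBall, dist_comm]) (by simp [Metric.mem_closedBall, dist_nonneg]) hyseg
    simpa [Metric.mem_closedBall] using this
  calc Metric.infDist z (frontier Ω) ≤ dist z y := Metric.infDist_le_dist_of_mem hyf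
  _ ≤ dist z x := by rw [dist_comm z y, dist_comm z x]; exact hdy

lemma aux_key_ineq {n : ℕ} {p ε M₀ M₁ M : ℝ} (hp : 2 < p) (hε : 0 < ε)
    {u ubar : EuclideanSpace ℝ (Fin n) → ℝ}
    (humeas : Measurable u) (hubarmeas : Measurable ubar)
    {S : Set (EuclideanSpace ℝ (Fin n))} {x : EuclideanSpace ℝ (Fin n)}
    (hball : ball x ε ⊆ S)
    (hub : ∀ y ∈ S, |u y| ≤ M₀) (hubarb : ∀ y ∈ S, |ubar y| ≤ M₁)
    (hM : ∀ y ∈ S, u y - ubar y ≤ M)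
    (hudpp : u x =
        ((p - 2) / (n + p)) / (2 * ε) *
            (∫ t in (0 : ℝ)..ε, (sSup (u '' Metric.ball x t) + sInf (u '' Metric.ball x t)))
          + ((n + 2) / (n + p)) * ⨍ z in Metric.ball x ε, u z)
    (hubardpp : ubar x =
        ((p - 2) / (n + p)) / (2 * ε) *
            (∫ t in (0 : ℝ)..ε, (sSup (ubar '' Metric.ball x t) + sInf (ubar '' Metric.ball x t)))
          + ((n + 2) / (n + p)) * ⨍ z in Metric.ball x ε, ubar z) :
    u x - ubar x ≤ (p - 2) / (n + p) * M
      + (n + 2) / (n + p) *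
        ((volume (ball x ε)).toReal⁻¹ * ∫ z in ball x ε, (u z - ubar z)) := by
  have hnp : (0:ℝ) < n + p := by positivity
  have hxS : x ∈ S := hball (mem_ball_self hε)
  -- integrability on the ball
  have hmb : (volume (ball x ε)) ≠ ⊤ := (measure_ball_lt_top).ne
  have hui : IntegrableOn u (ball x ε) volume := by
    apply Measure.integrableOn_of_bounded hmb humeas.aestronglyMeasurable
    exact (ae_restrict_iff' measurableSet_ball).2 (Filter.Eventually.of_forall
      fun y hy => by simpa [Real.norm_eq_abs] using hub y (hball hy))
  have hubari : IntegrableOn ubar (ball x ε) volume := by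
    apply Measure.integrableOn_of_bounded hmb hubarmeas.aestronglyMeasurable
    exact (ae_restrict_iff' measurableSet_ball).2 (Filter.Eventually.of_forall
      fun y hy => by simpa [Real.norm_eq_abs] using hubarb y (hball hy))
  -- modified sup/inf functions
  set Su : ℝ → ℝ := fun t => sSup (insert (u x) (u '' ball x t)) with hSu
  set Iu : ℝ → ℝ := fun t => sInf (insert (u x) (u '' ball x t)) with hIu
  set Sv : ℝ → ℝ := fun t => sSup (insert (ubar x) (ubar '' ball x t)) with hSv
  set Iv : ℝ → ℝ := fun t => sInf (insert (ubar x) (ubar '' ball x t)) with hIv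
  have hmemball : ∀ t ∈ Icc (0:ℝ) ε, ∀ a ∈ insert (u x) (u '' ball x t), |a| ≤ M₀ := by
    rintro t ht a (rfl | ⟨y, hy, rfl⟩)
    · exact hub x hxS
    · exact hub y (hball (ball_subset_ball ht.2 hy))
  have hmemballv : ∀ t ∈ Icc (0:ℝ) ε, ∀ a ∈ insert (ubar x) (ubar '' ball x t), |a| ≤ M₁ := by
    rintro t ht a (rfl | ⟨y, hy, rfl⟩)
    · exact hubarb x hxS
    · exact hubarb y (hball (ball_subset_ball ht.2 hy))
  have hbAu : ∀ t ∈ Icc (0:ℝ) ε, BddAbove (insert (u x) (u '' ball x t)) :=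
    fun t ht => ⟨M₀, fun a ha => (abs_le.1 (hmemball t ht a ha)).2⟩
  have hbBu : ∀ t ∈ Icc (0:ℝ) ε, BddBelow (insert (u x) (u '' ball x t)) :=
    fun t ht => ⟨-M₀, fun a ha => (abs_le.1 (hmemball t ht a ha)).1⟩
  have hbAv : ∀ t ∈ Icc (0:ℝ) ε, BddAbove (insert (ubar x) (ubar '' ball x t)) :=
    fun t ht => ⟨M₁, fun a ha => (abs_le.1 (hmemballv t ht a ha)).2⟩
  have hbBv : ∀ t ∈ Icc (0:ℝ) ε, BddBelow (insert (ubar x) (ubar '' ball x t)) :=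
    fun t ht => ⟨-M₁, fun a ha => (abs_le.1 (hmemballv t ht a ha)).1⟩
  -- monotonicity
  have hmonoSu : MonotoneOn Su (Icc (0:ℝ) ε) := fun s hs t ht hst =>
    csSup_le_csSup (hbAu t ht) (insert_nonempty _ _)
      (insert_subset_insert (image_mono (ball_subset_ball hst)))
  have hantiIu : AntitoneOn Iu (Icc (0:ℝ) ε) := fun s hs t ht hst =>
    csInf_le_csInf (hbBu t ht) (insert_nonempty _ _)
      (insert_subset_insert (image_mono (ball_subset_ball hst)))
  have hmonoSv : MonotoneOn Sv (Icc (0:ℝ) ε) := fun s hs t ht hst =>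
    csSup_le_csSup (hbAv t ht) (insert_nonempty _ _)
      (insert_subset_insert (image_mono (ball_subset_ball hst)))
  have hantiIv : AntitoneOn Iv (Icc (0:ℝ) ε) := fun s hs t ht hst =>
    csInf_le_csInf (hbBv t ht) (insert_nonempty _ _)
      (insert_subset_insert (image_mono (ball_subset_ball hst)))
  have huIcc : uIcc (0:ℝ) ε = Icc 0 ε := uIcc_of_le hε.le
  have hSuint : IntervalIntegrable (fun t => Su t + Iu t) volume 0 ε :=
    (MonotoneOn.intervalIntegrable (huIcc ▸ hmonoSu)).add
      (AntitoneOn.intervalIntegrable (huIcc ▸ hantiIu))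
  have hSvint : IntervalIntegrable (fun t => Sv t + Iv t) volume 0 ε :=
    (MonotoneOn.intervalIntegrable (huIcc ▸ hmonoSv)).add
      (AntitoneOn.intervalIntegrable (huIcc ▸ hantiIv))
  -- congruence with the original integrands
  have hcongru : (∫ t in (0:ℝ)..ε, (sSup (u '' ball x t) + sInf (u '' ball x t)))
      = ∫ t in (0:ℝ)..ε, (Su t + Iu t) := by
    apply intervalIntegral.integral_congr_ae
    refine Filter.Eventually.of_forall fun t ht => ?_
    rw [uIoc_of_le hε.le] at ht
    have : u x ∈ u '' ball x t := ⟨x, mem_ball_self ht.1, rfl⟩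
    simp only [hSu, hIu, insert_eq_self.2 this]
  have hcongrv : (∫ t in (0:ℝ)..ε, (sSup (ubar '' ball x t) + sInf (ubar '' ball x t)))
      = ∫ t in (0:ℝ)..ε, (Sv t + Iv t) := by
    apply intervalIntegral.integral_congr_ae
    refine Filter.Eventually.of_forall fun t ht => ?_
    rw [uIoc_of_le hε.le] at ht
    have : ubar x ∈ ubar '' ball x t := ⟨x, mem_ball_self ht.1, rfl⟩
    simp only [hSv, hIv, insert_eq_self.2 this]
  -- pointwise comparison
  have hpt : ∀ t ∈ Icc (0:ℝ) ε, Su t + Iu t ≤ Sv t + Iv t + 2 * M := by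
    intro t ht
    have h1 : Su t ≤ Sv t + M := by
      apply csSup_le (insert_nonempty _ _)
      rintro a (rfl | ⟨y, hy, rfl⟩)
      · calc u x ≤ ubar x + M := by linarith [hM x hxS]
        _ ≤ Sv t + M := by
            have := le_csSup (hbAv t ht) (mem_insert (ubar x) _)
            linarith
      · have hyS : y ∈ S := hball (ball_subset_ball ht.2 hy)
        calc u y ≤ ubar y + M := by linarith [hM y hyS]
        _ ≤ Sv t + M := by
            have := le_csSup (hbAv t ht) (mem_insert_of_mem _ ⟨y, hy, rfl⟩)
            linarith
    have h2 : Iu t ≤ Iv t + M := by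
      rw [← sub_le_iff_le_add]
      apply le_csInf (insert_nonempty _ _)
      rintro b (rfl | ⟨y, hy, rfl⟩)
      · have := csInf_le (hbBu t ht) (mem_insert (u x) _)
        have h := hM x hxS
        simp only [hIu] at *
        linarith
      · have hyS : y ∈ S := hball (ball_subset_ball ht.2 hy)
        have := csInf_le (hbBu t ht) (mem_insert_of_mem _ ⟨y, hy, rfl⟩)
        have h := hM y hyS
        simp only [hIu] at *
        linarith
    linarith
  -- integral comparison
  have hint : (∫ t in (0:ℝ)..ε, (Su t + Iu t))
      ≤ (∫ t in (0:ℝ)..ε, (Sv t + Iv t)) + ε * (2 * M) := by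
    have h := intervalIntegral.integral_mono_on hε.le hSuint
      (hSvint.add intervalIntegrable_const) hpt
    rw [intervalIntegral.integral_add hSvint intervalIntegrable_const,
      intervalIntegral.integral_const] at h
    simpa [smul_eq_mul] using h
  -- averages as integrals
  have havgu : (⨍ z in ball x ε, u z) = (volume (ball x ε)).toReal⁻¹ * ∫ z in ball x ε, u z := by
    rw [setAverage_eq, smul_eq_mul, measureReal_def]
  have havgv : (⨍ z in ball x ε, ubar z)
      = (volume (ball x ε)).toReal⁻¹ * ∫ z in ball x ε, ubar z := by
    rw [setAverage_eq, smul_eq_mul, measureReal_def]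
  have hsub : (∫ z in ball x ε, (u z - ubar z))
      = (∫ z in ball x ε, u z) - ∫ z in ball x ε, ubar z := integral_sub hui hubari
  -- put it together
  have hα : 0 < (p - 2) / (n + p) := div_pos (by linarith) hnp
  have hβ : 0 < ((n:ℝ) + 2) / (n + p) := by positivity
  rw [hudpp, hubardpp, hcongru, hcongrv, havgu, havgv]
  have hcoef : (p - 2) / (n + p) / (2 * ε) * (ε * (2 * M)) = (p - 2) / (n + p) * M := by
    field_simp
  have hJ := mul_le_mul_of_nonneg_left hint (le_of_lt (div_pos hα (by linarith : (0:ℝ) < 2 * ε)))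
  rw [mul_add, hcoef] at hJ
  have : (volume (ball x ε)).toReal⁻¹ * (∫ z in ball x ε, (u z - ubar z))
      = (volume (ball x ε)).toReal⁻¹ * (∫ z in ball x ε, u z)
        - (volume (ball x ε)).toReal⁻¹ * (∫ z in ball x ε, ubar z) := by
    rw [hsub]; ring
  rw [this]
  nlinarith [hJ, hβ]

/-- **Comparison principle for the DPP.** If `u` and `ū` are bounded Borel functions on
`Ω_ε` both satisfying the DPP at every point of `Ω`, and `ū ≥ u` on `Γ_ε`, then `ū ≥ u`
on all of `Ω_ε = Ω ∪ Γ_ε`. -/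
theorem dpp_comparison (n : ℕ) (hn : 2 ≤ n) (p : ℝ) (hp : 2 < p)
    (Ω : Set (EuclideanSpace ℝ (Fin n)))
    (hΩopen : IsOpen Ω) (hΩconn : IsConnected Ω) (hΩbdd : Bornology.IsBounded Ω)
    (ε : ℝ) (hε : ε ∈ Set.Ioo (0 : ℝ) 1)
    (u ubar : EuclideanSpace ℝ (Fin n) → ℝ)
    (humeas : Measurable u) (hubarmeas : Measurable ubar)
    (hubdd : ∃ M, ∀ x ∈ Ω ∪ {x | x ∉ Ω ∧ Metric.infDist x (frontier Ω) ≤ ε}, |u x| ≤ M)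
    (hubarbdd : ∃ M, ∀ x ∈ Ω ∪ {x | x ∉ Ω ∧ Metric.infDist x (frontier Ω) ≤ ε}, |ubar x| ≤ M)
    (hudpp : ∀ x ∈ Ω, u x =
        ((p - 2) / (n + p)) / (2 * ε) *
            (∫ t in (0 : ℝ)..ε, (sSup (u '' Metric.ball x t) + sInf (u '' Metric.ball x t)))
          + ((n + 2) / (n + p)) * ⨍ z in Metric.ball x ε, u z)
    (hubardpp : ∀ x ∈ Ω, ubar x =
        ((p - 2) / (n + p)) / (2 * ε) *
            (∫ t in (0 : ℝ)..ε, (sSup (ubar '' Metric.ball x t) + sInf (ubar '' Metric.ball x t)))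
          + ((n + 2) / (n + p)) * ⨍ z in Metric.ball x ε, ubar z)
    (hbdry : ∀ x ∈ {x | x ∉ Ω ∧ Metric.infDist x (frontier Ω) ≤ ε}, u x ≤ ubar x) :
    ∀ x ∈ Ω ∪ {x | x ∉ Ω ∧ Metric.infDist x (frontier Ω) ≤ ε}, u x ≤ ubar x := by
  obtain ⟨hε0, hε1⟩ := hε
  obtain ⟨M₀, hub⟩ := hubdd
  obtain ⟨M₁, hvb⟩ := hubarbdd
  set Γ : Set (EuclideanSpace ℝ (Fin n)) := {x | x ∉ Ω ∧ Metric.infDist x (frontier Ω) ≤ ε} with hΓdef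
  set T : Set (EuclideanSpace ℝ (Fin n)) := Ω ∪ Γ with hTdef
  have hnp : (0:ℝ) < n + p := by positivity
  obtain ⟨x₂, hx₂⟩ := hΩconn.nonempty
  have hTne : T.Nonempty := ⟨x₂, Or.inl hx₂⟩
  set w : EuclideanSpace ℝ (Fin n) → ℝ := fun y => u y - ubar y with hwdef
  have hwbdd : BddAbove (w '' T) := by
    refine ⟨M₀ + M₁, ?_⟩
    rintro a ⟨y, hy, rfl⟩
    have h1 := abs_le.1 (hub y hy); have h2 := abs_le.1 (hvb y hy)
    simp only [hwdef]
    have : |u y - ubar y| ≤ M₀ + M₁ := by rw [abs_le]; constructor <;> linarith [h1.1, h1.2, h2.1, h2.2]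
    linarith [le_abs_self (u y - ubar y)]
  set M : ℝ := sSup (w '' T) with hMdef
  have hle : ∀ y ∈ T, w y ≤ M := fun y hy => le_csSup hwbdd ⟨y, hy, rfl⟩
  suffices hM : M ≤ 0 by
    intro x hx
    have := hle x hx
    simp only [hwdef] at this; linarith
  by_contra hMc
  push_neg at hMc
  -- geometry
  have hsubΓ : ∀ z, z ∉ Ω → ∀ x' ∈ Ω, dist z x' < ε → z ∈ Γ := by
    intro z hz x' hx' hd
    exact ⟨hz, le_trans (aux_infDist_frontier_le hΩopen hx' hz) hd.le⟩
  have hballT : ∀ x ∈ Ω, ball x ε ⊆ T := by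
    intro x hx z hz
    by_cases hzΩ : z ∈ Ω
    · exact Or.inl hzΩ
    · exact Or.inr (hsubΓ z hzΩ x hx (mem_ball.1 hz))
  have hTball : ∀ x ∈ closure Ω, ball x (ε/2) ⊆ T := by
    intro x hx z hz
    by_cases hzΩ : z ∈ Ω
    · exact Or.inl hzΩ
    · obtain ⟨x', hx', hd⟩ := Metric.mem_closure_iff.1 hx (ε/2) (by linarith)
      exact Or.inr (hsubΓ z hzΩ x' hx'
        (lt_of_le_of_lt (dist_triangle z x x') (by rw [mem_ball] at hz; linarith)))
  -- the function g
  set g : EuclideanSpace ℝ (Fin n) → ℝ := fun y => M - w y with hgdef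
  have hgmeas : Measurable g := measurable_const.sub (humeas.sub hubarmeas)
  have hg0 : ∀ y ∈ T, 0 ≤ g y := fun y hy => by
    simp only [hgdef]; linarith [hle y hy]
  have hgint : ∀ (c : EuclideanSpace ℝ (Fin n)) (r : ℝ), ball c r ⊆ T → IntegrableOn g (ball c r) volume := by
    intro c r hsub
    apply Measure.integrableOn_of_bounded (M := |M| + (M₀ + M₁)) (measure_ball_lt_top).ne
      hgmeas.aestronglyMeasurable
    refine (ae_restrict_iff' measurableSet_ball).2 (Filter.Eventually.of_forall fun y hy => ?_)
    have h1 := abs_le.1 (hub y (hsub hy)); have h2 := abs_le.1 (hvb y (hsub hy))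
    simp only [hgdef, hwdef, Real.norm_eq_abs]
    rw [abs_le]; constructor <;> nlinarith [le_abs_self M, neg_abs_le M]
  have hwint : ∀ (c : EuclideanSpace ℝ (Fin n)) (r : ℝ), ball c r ⊆ T → IntegrableOn w (ball c r) volume := by
    intro c r hsub
    apply Measure.integrableOn_of_bounded (M := M₀ + M₁) (measure_ball_lt_top).ne
      (humeas.sub hubarmeas).aestronglyMeasurable
    refine (ae_restrict_iff' measurableSet_ball).2 (Filter.Eventually.of_forall fun y hy => ?_)
    have h1 := abs_le.1 (hub y (hsub hy)); have h2 := abs_le.1 (hvb y (hsub hy))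
    simp only [hwdef, Real.norm_eq_abs, Pi.sub_apply]
    rw [abs_le]; constructor <;> nlinarith
  set V : ℝ := (volume (ball (0:EuclideanSpace ℝ (Fin n)) ε)).toReal with hVdef
  have hV : 0 < V := ENNReal.toReal_pos (measure_ball_pos volume _ hε0).ne' measure_ball_lt_top.ne
  set C : ℝ := V * ((n + p)/(n + 2)) with hCdef
  have hC : 0 < C := by positivity
  -- the key inequality
  have hkey : ∀ x ∈ Ω, (∫ z in ball x ε, g z) ≤ g x * C := by
    intro x hx
    have hballx := hballT x hx
    have hkey0 := aux_key_ineq hp hε0 humeas hubarmeas hballx hub hvb hle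
      (hudpp x hx) (hubardpp x hx)
    have hVx : (volume (ball x ε)).toReal = V := by
      rw [hVdef, Measure.addHaar_ball_center]
    have hwintx : IntegrableOn w (ball x ε) volume := hwint x ε hballx
    have hgb : (∫ z in ball x ε, g z) = M * V - ∫ z in ball x ε, w z := by
      have h2 : IntegrableOn (fun _ : EuclideanSpace ℝ (Fin n) => M) (ball x ε) volume :=
        integrableOn_const measure_ball_lt_top.ne
      simp only [hgdef]
      rw [integral_sub h2 hwintx, setIntegral_const, measureReal_def, hVx, smul_eq_mul]; ring
    rw [hgb]
    rw [hVx] at hkey0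
    have hgx : g x = M - w x := rfl
    rw [hgx]
    have hIw : (fun z => u z - ubar z) = w := rfl
    rw [hIw] at hkey0
    set I : ℝ := ∫ z in ball x ε, w z with hIdef
    have hne1 : ((n:ℝ) + p) ≠ 0 := hnp.ne'
    have hne2 : ((n:ℝ) + 2) ≠ 0 := by positivity
    have hid : (M - ((p - 2)/(↑n + p) * M + (↑n + 2)/(↑n + p) * (V⁻¹ * I))) * (V * ((↑n + p)/(↑n + 2)))
        = M * V - I := by
      field_simp
      ring
    have h1 : (M - ((p - 2)/(↑n + p) * M + (↑n + 2)/(↑n + p) * (V⁻¹ * I))) * C ≤ (M - w x) * C := by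
      apply mul_le_mul_of_nonneg_right _ hC.le
      linarith [hkey0]
    rw [hCdef] at h1
    rw [hid] at h1
    rw [hCdef]
    linarith
  -- points where g is small
  have hnear : ∀ δ : ℝ, 0 < δ → ∃ x ∈ Ω, g x < δ := by
    intro δ hδ
    have hδ' : 0 < min δ M := lt_min hδ hMc
    obtain ⟨a, ⟨y, hyT, rfl⟩, hya⟩ :=
      exists_lt_of_lt_csSup (hTne.image w) (by linarith : M - min δ M < M)
    have hwy : 0 < w y := by
      have : min δ M ≤ M := min_le_right _ _
      linarith
    have hyΩ : y ∈ Ω := by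
      rcases hyT with h | h
      · exact h
      · exfalso; have := hbdry y h; simp only [hwdef] at hwy; linarith
    refine ⟨y, hyΩ, ?_⟩
    have : min δ M ≤ δ := min_le_left _ _
    simp only [hgdef]; linarith
  -- a cluster point of near-minimizers
  have hclcpt : IsCompact (closure Ω) := hΩbdd.isCompact_closure
  set K : ℕ → Set (EuclideanSpace ℝ (Fin n)) :=
    fun k => closure {x | x ∈ Ω ∧ g x < 1/(k+1)} with hKdef
  have hKne : ∀ k, (K k).Nonempty := by
    intro k
    obtain ⟨x, hx, hgx⟩ := hnear (1/(k+1)) (by positivity)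
    exact ⟨x, subset_closure ⟨hx, hgx⟩⟩
  have hKanti : ∀ k, K (k+1) ⊆ K k := by
    intro k
    apply closure_mono
    rintro x ⟨hxΩ, hxg⟩
    refine ⟨hxΩ, lt_of_lt_of_le hxg ?_⟩
    apply one_div_le_one_div_of_le (by positivity)
    push_cast; linarith
  have hKsub : ∀ k, K k ⊆ closure Ω := fun k => closure_mono (fun x hx => hx.1)
  have hKcl : ∀ k, IsClosed (K k) := fun k => isClosed_closure
  obtain ⟨x₀, hx₀⟩ : (⋂ k, K k).Nonempty := by
    apply IsCompact.nonempty_iInter_of_sequence_nonempty_isCompact_isClosed K hKanti hKne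
      (hclcpt.of_isClosed_subset (hKcl 0) (hKsub 0)) hKcl
  have hx₀cl : x₀ ∈ closure Ω := hKsub 0 (mem_iInter.1 hx₀ 0)
  have hx₀ball : ball x₀ (ε/2) ⊆ T := hTball x₀ hx₀cl
  -- the integral of g over the ball around the cluster point vanishes
  have hnn : ∀ (c : EuclideanSpace ℝ (Fin n)) (r : ℝ), ball c r ⊆ T →
      0 ≤ᵐ[volume.restrict (ball c r)] g :=
    fun c r hsub => (ae_restrict_iff' measurableSet_ball).2
      (Filter.Eventually.of_forall fun y hy => hg0 y (hsub hy))
  have hJ0 : (∫ z in ball x₀ (ε/2), g z) = 0 := by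
    apply le_antisymm
    · have hbound : ∀ k : ℕ, (∫ z in ball x₀ (ε/2), g z) ≤ C * (1/(k+1)) := by
        intro k
        have hx₀k := mem_iInter.1 hx₀ k
        obtain ⟨x, ⟨hxΩ, hgx⟩, hdx⟩ := Metric.mem_closure_iff.1 hx₀k (ε/2) (by linarith)
        have hss : ball x₀ (ε/2) ⊆ ball x ε := ball_subset_ball' (by linarith)
        have h1 : (∫ z in ball x₀ (ε/2), g z) ≤ ∫ z in ball x ε, g z := by
          apply setIntegral_mono_set (hgint x ε (hballT x hxΩ)) (hnn x ε (hballT x hxΩ))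
            (HasSubset.Subset.eventuallyLE hss)
        have h2 := hkey x hxΩ
        have h3 : g x * C ≤ (1/(k+1)) * C :=
          mul_le_mul_of_nonneg_right hgx.le hC.le
        calc (∫ z in ball x₀ (ε/2), g z) ≤ g x * C := le_trans h1 h2
        _ ≤ (1/(k+1)) * C := h3
        _ = C * (1/(k+1)) := by ring
      have htend : Filter.Tendsto (fun k : ℕ => C * (1/(k+1))) Filter.atTop (nhds 0) := by
        have := tendsto_one_div_add_atTop_nhds_zero_nat.const_mul C
        simpa using this
      exact ge_of_tendsto htend (Filter.Eventually.of_forall hbound)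
    · exact setIntegral_nonneg measurableSet_ball (fun y hy => hg0 y (hx₀ball hy))
  have hzero_ae : g =ᵐ[volume.restrict (ball x₀ (ε/2))] 0 :=
    (integral_eq_zero_iff_of_nonneg_ae (hnn x₀ (ε/2) hx₀ball)
      (hgint x₀ (ε/2) hx₀ball)).1 hJ0
  -- propagation of the zero set
  have hprop : ∀ y ∈ Ω, g y = 0 → g =ᵐ[volume.restrict (ball y ε)] 0 := by
    intro y hy hgy
    apply (integral_eq_zero_iff_of_nonneg_ae (hnn y ε (hballT y hy))
      (hgint y ε (hballT y hy))).1
    apply le_antisymm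
    · have := hkey y hy
      rw [hgy] at this; linarith
    · exact setIntegral_nonneg measurableSet_ball (fun z hz => hg0 z (hballT y hy hz))
  -- from an a.e. zero on a ball, pick an actual zero in any open subset
  have hpick : ∀ (s : Set (EuclideanSpace ℝ (Fin n))), IsOpen s → s.Nonempty →
      ∀ (c : EuclideanSpace ℝ (Fin n)) (r : ℝ), s ⊆ ball c r →
      g =ᵐ[volume.restrict (ball c r)] 0 → ∃ y ∈ s, g y = 0 := by
    intro s hs hsne c r hsub hae
    by_contra hcon
    push_neg at hcon
    have hmeas : MeasurableSet {z | g z ≠ 0} := (hgmeas (measurableSet_singleton 0)).compl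
    have hae' : ∀ᵐ z ∂(volume.restrict (ball c r)), g z = 0 := by
      filter_upwards [hae] with z hz using hz
    have h0 : volume.restrict (ball c r) {z | g z ≠ 0} = 0 := ae_iff.1 hae'
    have h1 : volume ({z | g z ≠ 0} ∩ ball c r) = 0 := by
      rwa [Measure.restrict_apply hmeas] at h0
    have h2 : s ⊆ {z | g z ≠ 0} ∩ ball c r := fun y hy => ⟨hcon y hy, hsub hy⟩
    have h3 : volume s = 0 := measure_mono_null h2 h1
    exact (hs.measure_pos volume hsne).ne' h3
  -- the propagating set A
  set Z : Set (EuclideanSpace ℝ (Fin n)) := {y | y ∈ Ω ∧ g y = 0} with hZdef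
  set A : Set (EuclideanSpace ℝ (Fin n)) := Ω ∩ ⋃ y ∈ Z, ball y (ε/2) with hAdef
  have hAopen : IsOpen A := hΩopen.inter (isOpen_biUnion fun _ _ => isOpen_ball)
  have hAsub : A ⊆ Ω := inter_subset_left
  have hAne : A.Nonempty := by
    have hx₀mem : (Ω ∩ ball x₀ (ε/2)).Nonempty := by
      obtain ⟨b, hb, hdb⟩ := Metric.mem_closure_iff.1 hx₀cl (ε/2) (by linarith)
      exact ⟨b, hb, by rw [mem_ball, dist_comm]; exact hdb⟩
    obtain ⟨y, ⟨hyΩ, hyb⟩, hgy⟩ := hpick (Ω ∩ ball x₀ (ε/2)) (hΩopen.inter isOpen_ball)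
      hx₀mem x₀ (ε/2) inter_subset_right hzero_ae
    exact ⟨y, hyΩ, mem_biUnion ⟨hyΩ, hgy⟩ (mem_ball_self (by linarith))⟩
  have hAcl : Ω ∩ closure A ⊆ A := by
    rintro x ⟨hxΩ, hxcl⟩
    obtain ⟨x', hx'A, hdx'⟩ := Metric.mem_closure_iff.1 hxcl (ε/4) (by linarith)
    obtain ⟨hx'Ω, hx'U⟩ := hx'A
    obtain ⟨y₁, hy₁Z, hx'b⟩ := mem_iUnion₂.1 hx'U
    obtain ⟨hy₁Ω, hgy₁⟩ := hy₁Z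
    have hae₁ := hprop y₁ hy₁Ω hgy₁
    have hss : ball x (ε/4) ⊆ ball y₁ ε := by
      apply ball_subset_ball'
      have h1 : dist x y₁ ≤ dist x x' + dist x' y₁ := dist_triangle _ _ _
      have h2 : dist x' y₁ < ε/2 := mem_ball.1 hx'b
      linarith
    have hae₂ : g =ᵐ[volume.restrict (ball x (ε/4))] 0 :=
      ae_restrict_of_ae_restrict_of_subset hss hae₁
    have hne : (Ω ∩ ball x (ε/4)).Nonempty := ⟨x, hxΩ, mem_ball_self (by linarith)⟩
    obtain ⟨y, ⟨hyΩ, hyb⟩, hgy⟩ := hpick (Ω ∩ ball x (ε/4)) (hΩopen.inter isOpen_ball)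
      hne x (ε/4) inter_subset_right hae₂
    refine ⟨hxΩ, mem_biUnion ⟨hyΩ, hgy⟩ ?_⟩
    rw [mem_ball, dist_comm]
    have := mem_ball.1 hyb
    linarith
  -- connectedness: A covers Ω
  have hAll : Ω ⊆ A := by
    by_contra hcon
    rw [Set.not_subset] at hcon
    obtain ⟨x₁, hx₁Ω, hx₁A⟩ := hcon
    have hVopen : IsOpen (Ω ∩ (closure A)ᶜ) := hΩopen.inter isClosed_closure.isOpen_compl
    have hcover : Ω ⊆ A ∪ (Ω ∩ (closure A)ᶜ) := by
      intro x hx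
      by_cases hc : x ∈ closure A
      · exact Or.inl (hAcl ⟨hx, hc⟩)
      · exact Or.inr ⟨hx, hc⟩
    obtain ⟨z, hzΩ, hzA, hzV⟩ := hΩconn.isPreconnected A (Ω ∩ (closure A)ᶜ) hAopen hVopen
      hcover ⟨hAne.choose, hAsub hAne.choose_spec, hAne.choose_spec⟩
      ⟨x₁, hx₁Ω, hx₁Ω, fun hc => hx₁A (hAcl ⟨hx₁Ω, hc⟩)⟩
    exact hzV.2 (subset_closure hzA)
  -- reach the boundary layer
  have hclne : (closure Ω).Nonempty := ⟨x₀, hx₀cl⟩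
  have hclnuniv : closure Ω ≠ univ := by
    intro hcl
    obtain ⟨R, hR⟩ := hΩbdd.closure.subset_closedBall x₂
    have hi : Nonempty (Fin n) := ⟨⟨0, by omega⟩⟩
    set v : EuclideanSpace ℝ (Fin n) := EuclideanSpace.single ⟨0, by omega⟩ ((|R|+1) : ℝ) with hvdef
    have hnv : ‖v‖ = |R| + 1 := by
      rw [hvdef, EuclideanSpace.norm_single]
      rw [Real.norm_eq_abs, abs_of_nonneg (by positivity)]
    have hmem : x₂ + v ∈ closedBall x₂ R := hR (hcl ▸ mem_univ _)
    rw [mem_closedBall, dist_self_add_left, hnv] at hmem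
    have : R ≤ |R| := le_abs_self R
    linarith
  obtain ⟨f, hf⟩ : (frontier (closure Ω)).Nonempty :=
    nonempty_frontier_iff.2 ⟨hclne, hclnuniv⟩
  have hffr : f ∈ frontier Ω := frontier_closure_subset hf
  have hfcl : f ∈ closure Ω := isClosed_closure.frontier_subset hf
  obtain ⟨x₁, hx₁Ω, hdfx₁⟩ := Metric.mem_closure_iff.1 hfcl (ε/8) (by linarith)
  obtain ⟨-, hx₁U⟩ := hAll hx₁Ω
  obtain ⟨y₁, ⟨hy₁Ω, hgy₁⟩, hx₁b⟩ := mem_iUnion₂.1 hx₁U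
  have hae₁ := hprop y₁ hy₁Ω hgy₁
  have hfz : f ∈ closure ((closure Ω)ᶜ) := by
    rw [frontier_eq_closure_inter_closure] at hf
    exact hf.2
  obtain ⟨z, hz, hdfz⟩ := Metric.mem_closure_iff.1 hfz (ε/8) (by linarith)
  obtain ⟨r', hr', hball'⟩ := Metric.isOpen_iff.1 isClosed_closure.isOpen_compl z hz
  set r : ℝ := min r' (ε/16) with hrdef
  have hr0 : 0 < r := lt_min hr' (by linarith)
  have hrsub : ball z r ⊆ (closure Ω)ᶜ := fun v hv => hball' (ball_subset_ball (min_le_left _ _) hv)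
  have hballΓ : ball z r ⊆ Γ := by
    intro v hv
    have hvΩ : v ∉ Ω := fun hc => hrsub hv (subset_closure hc)
    have hd : dist v f ≤ dist v z + dist z f := dist_triangle _ _ _
    have h1 : dist v z < r := mem_ball.1 hv
    have h2 : dist z f < ε/8 := by rw [dist_comm]; exact hdfz
    have h3 : r ≤ ε/16 := min_le_right _ _
    refine ⟨hvΩ, le_trans (Metric.infDist_le_dist_of_mem hffr) ?_⟩
    linarith
  have hsubball : ball z r ⊆ ball y₁ ε := by
    apply ball_subset_ball'
    have h1 : dist z y₁ ≤ dist z f + dist f x₁ + dist x₁ y₁ := dist_triangle4 _ _ _ _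
    have h2 : dist z f < ε/8 := by rw [dist_comm]; exact hdfz
    have h3 : dist x₁ y₁ < ε/2 := mem_ball.1 hx₁b
    have h4 : r ≤ ε/16 := min_le_right _ _
    linarith
  obtain ⟨v, hv, hgv⟩ := hpick (ball z r) isOpen_ball ⟨z, mem_ball_self hr0⟩ y₁ ε hsubball hae₁
  have hvΓ := hballΓ hv
  have := hbdry v hvΓ
  have hgv' : g v = M - (u v - ubar v) := rfl
  rw [hgv'] at hgv
  linarith
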